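/- arXiv:1809.00142 — 2 statements merged into one kernel-verified Lean document; each statement's English description precedes it below -/
import Mathlib

section
/- For every loopless digraph D on n vertices, the star dichromatic number χ⃗*(D) is a rational number expressible as k/d for natural numbers 1 ≤ d ≤ k ≤ n. -/
open Finset

variable {V : Type*}

/-- `v :: l` forms a directed cycle of the digraph with arc relation `E`:
the vertices are pairwise distinct and each one has an arc to the next, cyclically. -/
def IsDicycle (E : V → V → Prop) (v : V) (l : List V) : Prop :=
  (v :: l).Nodup ∧ List.Chain E v (l ++ [v])

/-- The vertex set `A` induces an acyclic subdigraph of the digraph `E`: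
no directed cycle of `E` has all of its vertices in `A`. -/
def AcyclicOn (E : V → V → Prop) (A : Set V) : Prop :=
  ∀ v l, IsDicycle E v l → ¬ (∀ x ∈ v :: l, x ∈ A)

/-- The open arc of length 1 in `ℝ/pℤ` starting at (the image of) `a`. -/
def unitArc (p a : ℝ) : Set (AddCircle p) :=
  (fun x : ℝ => (x : AddCircle p)) '' Set.Ioo a (a + 1)

/-- An acyclic `p`-colouring of the digraph `E` : the preimage of every open arc
of length 1 induces an acyclic subdigraph. -/
def IsAcyclicColouring (E : V → V → Prop) (p : ℝ) (c : V → AddCircle p) : Prop :=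
  ∀ a : ℝ, AcyclicOn E (c ⁻¹' unitArc p a)

/-- The star dichromatic number of a digraph. -/
noncomputable def starDichromatic (E : V → V → Prop) : ℝ :=
  sInf {p : ℝ | 1 ≤ p ∧ ∃ c : V → AddCircle p, IsAcyclicColouring E p c}

/-- A weak circular `p`-colouring in the sense of Bokal et al. -/
def IsWeakCircularColouring (E : V → V → Prop) (p : ℝ) (c : V → AddCircle p) : Prop :=
  (∀ u w, E u w → c u = c w ∨
    ∃ r : ℝ, r ∈ Set.Ico (0 : ℝ) p ∧ (r : AddCircle p) = c w - c u ∧ 1 ≤ r) ∧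
  ∀ t : AddCircle p, AcyclicOn E (c ⁻¹' {t})

/-- The circular dichromatic number of a digraph. -/
noncomputable def circularDichromatic (E : V → V → Prop) : ℝ :=
  sInf {p : ℝ | 1 ≤ p ∧ ∃ c : V → AddCircle p, IsWeakCircularColouring E p c}

/-- The fractional dichromatic number: the optimal value of the covering linear
program over the acyclic vertex subsets. -/
noncomputable def fracDichromatic [Fintype V] [DecidableEq V] (E : V → V → Prop) : ℝ :=
  sInf {r : ℝ | ∃ x : Finset V → ℝ, (∀ A, 0 ≤ x A) ∧
    (∀ A : Finset V, x A ≠ 0 → AcyclicOn E ↑A) ∧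
    (∀ v : V, 1 ≤ ∑ A ∈ Finset.univ.filter (fun A : Finset V => v ∈ A), x A) ∧
    r = ∑ A : Finset V, x A}

/-- The cyclic interval `{i, i+1, ..., i+d-1}` in `ℤ/kℤ`. -/
def cycInterval (k : ℕ) (i : ZMod k) (d : ℕ) : Set (ZMod k) :=
  {j : ZMod k | ∃ t : ℕ, t < d ∧ j = i + (t : ZMod k)}

/-- An acyclic `(k,d)`-colouring of the digraph `E`. -/
def IsAcyclicKDColouring (E : V → V → Prop) (k d : ℕ) (c : V → ZMod k) : Prop :=
  ∀ i : ZMod k, AcyclicOn E (c ⁻¹' cycInterval k i d)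

/-- The dichromatic number: the least `k` such that the vertex set can be partitioned
into `k` classes each inducing an acyclic subdigraph. -/
noncomputable def dichromatic (E : V → V → Prop) : ℕ :=
  sInf {k : ℕ | ∃ c : V → Fin k, ∀ i : Fin k, AcyclicOn E (c ⁻¹' {i})}

/-- `v :: l` forms a cycle of the simple graph `G` (of length at least 3). -/
def IsGraphCycle (G : SimpleGraph V) (v : V) (l : List V) : Prop :=
  3 ≤ (v :: l).length ∧ (v :: l).Nodup ∧ List.Chain G.Adj v (l ++ [v])

/-- The vertex set `A` induces a forest (acyclic subgraph) in the simple graph `G`. -/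
def ForestOn (G : SimpleGraph V) (A : Set V) : Prop :=
  ∀ v l, IsGraphCycle G v l → ¬ (∀ x ∈ v :: l, x ∈ A)

/-- A `(k,d)`-tree-colouring of a graph. -/
def IsTreeColouring (G : SimpleGraph V) (k d : ℕ) (c : V → ZMod k) : Prop :=
  ∀ i : ZMod k, ForestOn G (c ⁻¹' cycInterval k i d)

/-- The circular vertex arboricity of a graph. -/
noncomputable def circularVertexArboricity (G : SimpleGraph V) : ℝ :=
  sInf {r : ℝ | ∃ k d : ℕ, 1 ≤ d ∧ d ≤ k ∧
    (∃ c : V → ZMod k, IsTreeColouring G k d c) ∧ r = (k : ℝ) / d}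

/-- `E` is an orientation of the simple graph `G`: for each edge exactly one of the
two possible arcs is present, and there are no other arcs. -/
def IsOrientation (G : SimpleGraph V) (E : V → V → Prop) : Prop :=
  ∀ u w, ((E u w ∨ E w u) ↔ G.Adj u w) ∧ ¬ (E u w ∧ E w u)

/-- The star dichromatic number of a graph: the maximum over all orientations. -/
noncomputable def starDichromaticGraph (G : SimpleGraph V) : ℝ :=
  sSup {r : ℝ | ∃ E : V → V → Prop, IsOrientation G E ∧ r = starDichromatic E}

/-- The fractional dichromatic number of a graph: the maximum over all orientations. -/
noncomputable def fracDichromaticGraph [Fintype V] [DecidableEq V] (G : SimpleGraph V) : ℝ :=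
  sSup {r : ℝ | ∃ E : V → V → Prop, IsOrientation G E ∧ r = fracDichromatic E}

/-- The fractional chromatic number of a graph: the optimal value of the covering
linear program over the independent vertex subsets. -/
noncomputable def fractionalChromatic [Fintype V] [DecidableEq V] (G : SimpleGraph V) : ℝ :=
  sInf {r : ℝ | ∃ x : Finset V → ℝ, (∀ A, 0 ≤ x A) ∧
    (∀ A : Finset V, x A ≠ 0 → ∀ u ∈ A, ∀ w ∈ A, ¬ G.Adj u w) ∧
    (∀ v : V, 1 ≤ ∑ A ∈ Finset.univ.filter (fun A : Finset V => v ∈ A), x A) ∧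
    r = ∑ A : Finset V, x A}

/-- A `(k,d)`-colouring of a graph in the sense of Vince: colours of adjacent vertices
have circular `k`-distance at least `d`. -/
def IsVinceColouring (G : SimpleGraph V) (k d : ℕ) (c : V → ZMod k) : Prop :=
  ∀ u w, G.Adj u w → d ≤ (c u - c w).val ∧ d ≤ (c w - c u).val

/-- Vince's star (circular) chromatic number of a graph. -/
noncomputable def starChromatic (G : SimpleGraph V) : ℝ :=
  sInf {r : ℝ | ∃ k d : ℕ, 1 ≤ d ∧ d ≤ k ∧
    (∃ c : V → ZMod k, IsVinceColouring G k d c) ∧ r = (k : ℝ) / d}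

/-- The circulant digraph `C⃗(k,d)` on `ℤ/kℤ`: each vertex `i` has the outgoing arcs
`(i, i+d), (i, i+d+1), …, (i, i+k-1)`. -/
def circulantDigraph (k d : ℕ) : ZMod k → ZMod k → Prop :=
  fun i j => ∃ t : ℕ, d ≤ t ∧ t < k ∧ j = i + (t : ZMod k)

/-- The directed cycle `C⃗_n` on `ℤ/nℤ`. -/
def dirCycle (n : ℕ) : ZMod n → ZMod n → Prop :=
  fun i j => j = i + 1

/-- The digraph `D^s` obtained from `D` by adding a dominating source `none`. -/
def addSource (E : V → V → Prop) : Option V → Option V → Prop :=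
  fun a b => match a, b with
  | none, some _ => True
  | some u, some w => E u w
  | _, none => False

/-- The wheel graph `W_k`: a cycle on `ℤ/kℤ` together with a hub `none` adjacent to
every cycle vertex. -/
def wheelGraph (k : ℕ) : SimpleGraph (Option (ZMod k)) :=
  SimpleGraph.fromRel (fun a b => match a, b with
    | none, some _ => True
    | some i, some j => j = i + 1
    | _, none => False)

section Dev
variable {V : Type*}

noncomputable def rp (p t : ℝ) : ℝ := p * Int.fract (t / p)

lemma rp_mem {p : ℝ} (hp : 0 < p) (t : ℝ) : rp p t ∈ Set.Ico 0 p := by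
  constructor
  · exact mul_nonneg hp.le (Int.fract_nonneg _)
  · have := Int.fract_lt_one (t / p)
    calc p * Int.fract (t/p) < p * 1 := by
          exact mul_lt_mul_of_pos_left this hp
      _ = p := mul_one p

lemma rp_sub_int {p : ℝ} (hp : 0 < p) (t : ℝ) : ∃ m : ℤ, rp p t - t = m * p := by
  refine ⟨-⌊t / p⌋, ?_⟩
  have : rp p t = t - ⌊t / p⌋ * p := by
    unfold rp Int.fract
    field_simp
  rw [this]
  push_cast
  ring

lemma rp_congr {p : ℝ} (hp : 0 < p) {s t : ℝ} (m : ℤ) (h : t - s = m * p) :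
    rp p t = rp p s := by
  unfold rp
  have : t / p = s / p + m := by field_simp [sub_eq_iff_eq_add] at h ⊢; linarith
  rw [this, Int.fract_add_intCast]

lemma rp_eq_self {p : ℝ} (hp : 0 < p) {t : ℝ} (h : t ∈ Set.Ico 0 p) : rp p t = t := by
  unfold rp
  have h1 : Int.fract (t / p) = t / p := by
    rw [Int.fract_eq_self]
    constructor
    · exact div_nonneg h.1 hp.le
    · rw [div_lt_one hp]; exact h.2
  rw [h1]; field_simp

lemma rp_eq_rp {p : ℝ} (hp : 0 < p) {s t : ℝ} (h : rp p s = rp p t) :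
    ∃ m : ℤ, t - s = m * p := by
  obtain ⟨a, ha⟩ := rp_sub_int hp s
  obtain ⟨b, hb⟩ := rp_sub_int hp t
  refine ⟨a - b, ?_⟩
  push_cast
  have : rp p s - s - (rp p t - t) = a * p - b * p := by rw [ha, hb]
  rw [h] at this
  linarith

/-- validity, containment form -/
def ValidC (E : V → V → Prop) (p : ℝ) (x : V → ℝ) : Prop :=
  ∀ a : ℝ, AcyclicOn E {v | ∃ m : ℤ, x v + m * p ∈ Set.Ioo a (a + 1)}

/-- validity, span form -/
def ValidS (E : V → V → Prop) (p : ℝ) (x : V → ℝ) : Prop :=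
  ∀ v l, IsDicycle E v l → ∀ a ∈ v :: l, ∃ b ∈ v :: l, 1 ≤ rp p (x b - x a)

lemma acyclicOn_subsingleton {E : V → V → Prop} (hE : ∀ v, ¬ E v v) {A : Set V}
    (hA : ∀ u ∈ A, ∀ w ∈ A, u = w) : AcyclicOn E A := by
  rintro v l ⟨hnd, hch⟩ hall
  cases l with
  | nil => simp [List.Chain] at hch; exact hE v hch
  | cons w l' =>
    have hv : v ∈ A := hall v (by simp)
    have hw : w ∈ A := hall w (by simp)
    have : v = w := hA v hv w hw
    simp [this] at hnd

lemma validC_iff_validS {E : V → V → Prop} {p : ℝ} (hp : 1 ≤ p) (x : V → ℝ) :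
    ValidC E p x ↔ ValidS E p x := by
  have hp0 : 0 < p := lt_of_lt_of_le one_pos hp
  constructor
  · intro hC v l hvl a ha
    by_contra hno
    push_neg at hno
    -- all spans < 1 : build a window
    classical
    obtain ⟨b₀, hb₀, hmax⟩ := Finset.exists_max_image (v :: l).toFinset
      (fun b => rp p (x b - x a)) ⟨v, by simp⟩
    set M := rp p (x b₀ - x a) with hM
    have hM1 : M < 1 := hno b₀ (by simpa using hb₀)
    have hM0 : 0 ≤ M := (rp_mem hp0 _).1
    set ε := (1 - M) / 2 with hε
    have hε0 : 0 < ε := by rw [hε]; linarith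
    refine hC (x a - ε) v l hvl ?_
    intro c hc
    obtain ⟨m, hm⟩ := rp_sub_int hp0 (x c - x a)
    refine ⟨m, ?_⟩
    have hle : rp p (x c - x a) ≤ M := hmax c (by simpa using hc)
    have h0 : 0 ≤ rp p (x c - x a) := (rp_mem hp0 _).1
    constructor
    · nlinarith [hm]
    · nlinarith [hm]
  · intro hS a v l hvl hall
    classical
    -- choose positions
    choose m hm using fun c (hc : c ∈ v :: l) => hall c hc
    obtain ⟨a₀, ha₀, hmin⟩ := Finset.exists_min_image (v :: l).toFinset
      (fun c => if hc : c ∈ v :: l then x c + m c hc * p else 0) ⟨v, by simp⟩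
    rw [List.mem_toFinset] at ha₀
    obtain ⟨b, hb, hb1⟩ := hS v l hvl a₀ ha₀
    -- contradiction : rp p (x b - x a₀) < 1
    have h1 := hm a₀ ha₀
    have h2 := hm b hb
    have h3 : (x a₀ + m a₀ ha₀ * p) ≤ (x b + m b hb * p) := by
      have := hmin b (by simpa using hb)
      simp only [dif_pos ha₀, dif_pos hb] at this
      exact this
    have hval : rp p (x b - x a₀) = (x b + m b hb * p) - (x a₀ + m a₀ ha₀ * p) := by
      have heq : rp p (x b - x a₀) =
          rp p ((x b + m b hb * p) - (x a₀ + m a₀ ha₀ * p)) := by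
        refine (rp_congr hp0 (m b hb - m a₀ ha₀) ?_).symm
        push_cast; ring
      rw [heq]
      refine rp_eq_self hp0 ⟨by linarith, ?_⟩
      have : (x b + m b hb * p) - (x a₀ + m a₀ ha₀ * p) < 1 := by
        rcases h1 with ⟨hl1, hr1⟩; rcases h2 with ⟨hl2, hr2⟩; linarith
      linarith
    rcases h1 with ⟨hl1, hr1⟩; rcases h2 with ⟨hl2, hr2⟩
    rw [hval] at hb1
    linarith

lemma mem_unitArc (p a x : ℝ) :
    ((x : AddCircle p) ∈ unitArc p a) ↔ ∃ m : ℤ, x + m * p ∈ Set.Ioo a (a + 1) := by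
  unfold unitArc
  constructor
  · rintro ⟨t, ht, hteq⟩
    have : t - x ∈ AddSubgroup.zmultiples p := (QuotientAddGroup.eq_iff_sub_mem).mp hteq
    obtain ⟨k, hk⟩ := AddSubgroup.mem_zmultiples_iff.mp this
    refine ⟨k, ?_⟩
    have : (k : ℝ) * p = t - x := by rw [← hk]; simp [zsmul_eq_mul]
    have : x + k * p = t := by linarith
    rwa [this]
  · rintro ⟨m, hm⟩
    refine ⟨x + m * p, hm, ?_⟩
    rw [QuotientAddGroup.eq_iff_sub_mem]
    refine AddSubgroup.mem_zmultiples_iff.mpr ⟨m, ?_⟩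
    rw [zsmul_eq_mul]; ring

lemma coe_rp {p : ℝ} (hp : 0 < p) (t : ℝ) : ((rp p t : ℝ) : AddCircle p) = (t : ℝ) := by
  obtain ⟨m, hm⟩ := rp_sub_int hp t
  rw [QuotientAddGroup.eq_iff_sub_mem]
  exact AddSubgroup.mem_zmultiples_iff.mpr ⟨m, by rw [zsmul_eq_mul]; linarith⟩

lemma colouring_iff_validC (E : V → V → Prop) {p : ℝ} (hp : 0 < p) :
    (∃ c : V → AddCircle p, IsAcyclicColouring E p c) ↔
      ∃ x : V → ℝ, (∀ v, x v ∈ Set.Ico 0 p) ∧ ValidC E p x := by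
  constructor
  · rintro ⟨c, hc⟩
    have hsurj : ∀ v, ∃ t : ℝ, (t : AddCircle p) = c v := fun v =>
      Quotient.exists_rep (c v)
    choose t ht using hsurj
    refine ⟨fun v => rp p (t v), fun v => rp_mem hp _, ?_⟩
    intro a
    have hset : {v | ∃ m : ℤ, rp p (t v) + m * p ∈ Set.Ioo a (a + 1)} =
        c ⁻¹' unitArc p a := by
      ext v
      simp only [Set.mem_setOf_eq, Set.mem_preimage]
      rw [← ht v, ← coe_rp hp (t v), mem_unitArc]
    rw [hset]
    exact hc a
  · rintro ⟨x, _, hx⟩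
    refine ⟨fun v => (x v : AddCircle p), ?_⟩
    intro a
    have hset : (fun v => ((x v : ℝ) : AddCircle p)) ⁻¹' unitArc p a =
        {v | ∃ m : ℤ, x v + m * p ∈ Set.Ioo a (a + 1)} := by
      ext v
      simp only [Set.mem_setOf_eq, Set.mem_preimage]
      rw [mem_unitArc]
    rw [hset]
    exact hx a

lemma validC_closed (E : V → V → Prop) :
    IsClosed {q : ℝ × (V → ℝ) | ValidC E q.1 q.2} := by
  classical
  have : {q : ℝ × (V → ℝ) | ValidC E q.1 q.2} =
      ⋂ (a : ℝ), ⋂ (v : V), ⋂ (l : List V),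
        {q : ℝ × (V → ℝ) | IsDicycle E v l →
          ¬ ∀ c ∈ v :: l, ∃ m : ℤ, q.2 c + m * q.1 ∈ Set.Ioo a (a + 1)} := by
    ext q
    simp only [Set.mem_iInter, Set.mem_setOf_eq]
    constructor
    · intro h a v l hvl hall
      exact h a v l hvl (by simpa using hall)
    · intro h a v l hvl hall
      exact h a v l hvl (by simpa using hall)
  rw [this]
  refine isClosed_iInter fun a => isClosed_iInter fun v => isClosed_iInter fun l => ?_
  by_cases hvl : IsDicycle E v l
  · have : {q : ℝ × (V → ℝ) | IsDicycle E v l →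
        ¬ ∀ c ∈ v :: l, ∃ m : ℤ, q.2 c + m * q.1 ∈ Set.Ioo a (a + 1)} =
        ({q : ℝ × (V → ℝ) |
          ∀ c ∈ v :: l, ∃ m : ℤ, q.2 c + m * q.1 ∈ Set.Ioo a (a + 1)})ᶜ := by
      ext q; simp [hvl]
    rw [this]
    refine IsOpen.isClosed_compl ?_
    have : {q : ℝ × (V → ℝ) |
        ∀ c ∈ v :: l, ∃ m : ℤ, q.2 c + m * q.1 ∈ Set.Ioo a (a + 1)} =
        ⋂ c ∈ (v :: l).toFinset,
          ⋃ m : ℤ, {q : ℝ × (V → ℝ) | q.2 c + m * q.1 ∈ Set.Ioo a (a + 1)} := by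
      ext q
      simp only [Set.mem_iInter, Set.mem_setOf_eq, Set.mem_iUnion, List.mem_toFinset]
    rw [this]
    refine isOpen_biInter_finset fun c _ => isOpen_iUnion fun m => ?_
    have hc : Continuous fun q : ℝ × (V → ℝ) => q.2 c + (m : ℝ) * q.1 :=
      (((continuous_apply c).comp continuous_snd).add (continuous_const.mul continuous_fst))
    exact isOpen_Ioo.preimage hc
  · have : {q : ℝ × (V → ℝ) | IsDicycle E v l →
        ¬ ∀ c ∈ v :: l, ∃ m : ℤ, q.2 c + m * q.1 ∈ Set.Ioo a (a + 1)} = Set.univ := by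
      ext q; simp [hvl]
    rw [this]; exact isClosed_univ

end Dev

section Dev2
variable {V : Type*} [Fintype V] [Nonempty V]

lemma card_mem_S (E : V → V → Prop) (hE : ∀ v, ¬ E v v) :
    (Fintype.card V : ℝ) ∈ {p : ℝ | 1 ≤ p ∧ ∃ c : V → AddCircle p, IsAcyclicColouring E p c} := by
  classical
  set n := Fintype.card V with hn
  have hn0 : 0 < n := Fintype.card_pos
  have hn1 : (1 : ℝ) ≤ n := by exact_mod_cast hn0
  refine ⟨hn1, ?_⟩
  rw [colouring_iff_validC E (by linarith : (0:ℝ) < n)]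
  set ek := Fintype.equivFin V with hek
  refine ⟨fun v => ((ek v : ℕ) : ℝ), ?_, ?_⟩
  · intro v
    constructor
    · positivity
    · show ((ek v : ℕ) : ℝ) < (n : ℝ)
      exact_mod_cast (ek v).2
  · intro a
    refine acyclicOn_subsingleton hE ?_
    rintro u ⟨m, hm⟩ w ⟨m', hm'⟩
    simp only at hm hm'
    set A : ℤ := ((ek u : ℕ) : ℤ) + m * n with hA
    set B : ℤ := ((ek w : ℕ) : ℤ) + m' * n with hB
    have hAr : (A : ℝ) ∈ Set.Ioo a (a + 1) := by
      have : (A : ℝ) = ((ek u : ℕ) : ℝ) + m * n := by rw [hA]; push_cast; ring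
      rw [this]; exact hm
    have hBr : (B : ℝ) ∈ Set.Ioo a (a + 1) := by
      have : (B : ℝ) = ((ek w : ℕ) : ℝ) + m' * n := by rw [hB]; push_cast; ring
      rw [this]; exact hm'
    have hABr : |(A : ℝ) - (B : ℝ)| < 1 := by
      rcases hAr with ⟨h1, h2⟩; rcases hBr with ⟨h3, h4⟩
      rw [abs_lt]; constructor <;> linarith
    have hAB : A = B := by
      have h5 : |A - B| < 1 := by exact_mod_cast hABr
      have h6 := abs_lt.mp h5
      omega
    have hu : ((ek u : ℕ) : ℤ) - ((ek w : ℕ) : ℤ) = (m' - m) * n := by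
      rw [hA, hB] at hAB; linarith [hAB]
    have hub : ((ek u : ℕ) : ℤ) < n := by exact_mod_cast (ek u).2
    have hwb : ((ek w : ℕ) : ℤ) < n := by exact_mod_cast (ek w).2
    have h0u : (0:ℤ) ≤ ((ek u : ℕ) : ℤ) := by positivity
    have h0w : (0:ℤ) ≤ ((ek w : ℕ) : ℤ) := by positivity
    have hnz : (0:ℤ) < (n:ℤ) := by exact_mod_cast hn0
    have hmm : m' - m = 0 := by nlinarith [hu]
    have heq : ((ek u : ℕ) : ℤ) = ((ek w : ℕ) : ℤ) := by
      rw [hmm, zero_mul] at hu; omega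
    have : ek u = ek w := Fin.ext (by exact_mod_cast heq)
    exact ek.injective this

lemma exists_valid_at_inf (E : V → V → Prop) (hE : ∀ v, ¬ E v v) :
    ∃ x : V → ℝ, ValidC E
      (sInf {p : ℝ | 1 ≤ p ∧ ∃ c : V → AddCircle p, IsAcyclicColouring E p c}) x := by
  classical
  set n := Fintype.card V with hn
  set S := {p : ℝ | 1 ≤ p ∧ ∃ c : V → AddCircle p, IsAcyclicColouring E p c} with hS
  have hnS : (n : ℝ) ∈ S := card_mem_S E hE
  have hbdd : BddBelow S := ⟨1, fun p hp => hp.1⟩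
  have hSne : S.Nonempty := ⟨n, hnS⟩
  set S' := S ∩ Set.Icc (1:ℝ) n with hS'
  have hnn : (1:ℝ) ≤ n := hnS.1
  have hnS' : (n:ℝ) ∈ S' := ⟨hnS, hnn, le_refl _⟩
  have hbdd' : BddBelow S' := hbdd.mono Set.inter_subset_left
  have hinf_eq : sInf S = sInf S' := by
    refine le_antisymm (csInf_le_csInf hbdd ⟨n, hnS'⟩ Set.inter_subset_left) ?_
    refine le_csInf hSne fun p hp => ?_
    by_cases hpn : p ≤ n
    · exact csInf_le hbdd' ⟨hp, hp.1, hpn⟩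
    · exact (csInf_le hbdd' hnS').trans (le_of_not_ge hpn)
  set K := {q : ℝ × (V → ℝ) | ValidC E q.1 q.2} ∩
      (Set.Icc (1:ℝ) n ×ˢ Set.univ.pi fun _ : V => Set.Icc (0:ℝ) n) with hK
  have hKcomp : IsCompact K :=
    IsCompact.inter_left
      (isCompact_Icc.prod (isCompact_univ_pi fun _ => isCompact_Icc))
      (validC_closed E)
  have hBcomp : IsCompact (Prod.fst '' K) := hKcomp.image continuous_fst
  have hBclosed : IsClosed (Prod.fst '' K) := hBcomp.isClosed
  have hsub : S' ⊆ Prod.fst '' K := by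
    rintro p ⟨hpS, hp1, hpn⟩
    obtain ⟨x, hxIco, hxV⟩ := (colouring_iff_validC E (by linarith : (0:ℝ) < p)).mp hpS.2
    refine ⟨(p, x), ⟨hxV, ⟨hp1, hpn⟩, ?_⟩, rfl⟩
    intro v _
    exact ⟨(hxIco v).1, le_trans (hxIco v).2.le hpn⟩
  have hmem : sInf S' ∈ Prod.fst '' K := by
    have h1 : sInf S' ∈ closure S' := csInf_mem_closure ⟨n, hnS'⟩ hbdd'
    have h2 : closure S' ⊆ Prod.fst '' K := by
      rw [← hBclosed.closure_eq]; exact closure_mono hsub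
    exact h2 h1
  rw [hinf_eq]
  obtain ⟨⟨p, x⟩, ⟨hval, _⟩, hfst⟩ := hmem
  exact ⟨x, by rwa [← hfst]⟩

end Dev2

section Dev3
variable {V : Type*}

lemma rp_rp_sub {p : ℝ} (hp0 : 0 < p) (s t : ℝ) :
    rp p (rp p s - rp p t) = rp p (s - t) := by
  obtain ⟨ms, hms⟩ := rp_sub_int hp0 s
  obtain ⟨mt, hmt⟩ := rp_sub_int hp0 t
  refine rp_congr hp0 (ms - mt) ?_
  push_cast; linarith

lemma rp_div {p c : ℝ} (hp0 : 0 < p) (hc : 0 < c) (t : ℝ) :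
    rp (p / c) (t / c) = rp p t / c := by
  unfold rp
  have h1 : (t / c) / (p / c) = t / p := by field_simp
  rw [h1]; field_simp

lemma validS_rp {E : V → V → Prop} {p : ℝ} (hp0 : 0 < p) {x : V → ℝ}
    (hx : ValidS E p x) : ValidS E p (fun v => rp p (x v)) := by
  intro v l hvl a ha
  obtain ⟨b, hb, hb1⟩ := hx v l hvl a ha
  exact ⟨b, hb, by rwa [rp_rp_sub hp0]⟩

variable [Fintype V] [Nonempty V]

lemma rationality (E : V → V → Prop) (hE : ∀ v, ¬ E v v) {p : ℝ} (hp1 : 1 < p)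
    {x : V → ℝ} (hx : ValidS E p x)
    (hmin : ∀ p', 1 ≤ p' → p' < p → ¬ ∃ y : V → ℝ, ValidS E p' y) :
    ∃ k d : ℕ, 1 ≤ d ∧ d ≤ k ∧ k ≤ Fintype.card V ∧ p = (k : ℝ) / d := by
  classical
  have hp0 : 0 < p := lt_trans one_pos hp1
  set r := fun v => rp p (x v) with hr
  have hrIco : ∀ v, r v ∈ Set.Ico 0 p := fun v => rp_mem hp0 _
  have hrS : ValidS E p r := validS_rp hp0 hx
  set X : Finset ℝ := Finset.image r Finset.univ with hX
  have hrX : ∀ v, r v ∈ X := fun v => Finset.mem_image_of_mem r (Finset.mem_univ v)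
  by_cases hA : ∃ v : V, ∀ i : ℕ, rp p (r v + i) ∈ X
  · -- Case A : a tight cycle exists, p is rational
    obtain ⟨v, hv⟩ := hA
    have hcard : X.card < (Finset.univ : Finset (Fin (X.card + 1))).card := by
      simp
    obtain ⟨i, -, j, -, hij, hFeq⟩ :=
      Finset.exists_ne_map_eq_of_card_lt_of_maps_to hcard
        (f := fun i : Fin (X.card + 1) => rp p (r v + (i : ℕ)))
        (fun i _ => hv (i : ℕ))
    -- wlog i < j
    wlog hlt : (i : ℕ) < (j : ℕ) generalizing i j
    · refine this j i hij.symm hFeq.symm ?_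
      have hne : (i : ℕ) ≠ (j : ℕ) := fun hc => hij (Fin.ext hc)
      omega
    obtain ⟨z, hz⟩ := rp_eq_rp hp0 hFeq
    have hz' : ((j : ℕ) : ℝ) - ((i : ℕ) : ℝ) = z * p := by
      have : (r v + ((j : ℕ) : ℝ)) - (r v + ((i : ℕ) : ℝ)) = z * p := hz
      linarith
    set k : ℕ := (j : ℕ) - (i : ℕ) with hk
    have hkr : (k : ℝ) = z * p := by
      rw [hk]; push_cast [Nat.cast_sub hlt.le]; linarith [hz']
    have hk0 : 0 < k := by omega
    have hz0 : 0 < z := by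
      by_contra hzneg
      push_neg at hzneg
      have : (z : ℝ) * p ≤ 0 :=
        mul_nonpos_of_nonpos_of_nonneg (by exact_mod_cast hzneg) hp0.le
      have : (0:ℝ) < k := by exact_mod_cast hk0
      linarith
    refine ⟨k, z.toNat, ?_, ?_, ?_, ?_⟩
    · omega
    · -- d ≤ k since p ≥ 1
      have hzr : ((z.toNat : ℕ) : ℝ) = (z : ℝ) := by
        exact_mod_cast congrArg (Int.cast : ℤ → ℝ) (Int.toNat_of_nonneg hz0.le)
      have : ((z.toNat : ℕ) : ℝ) ≤ (k : ℝ) := by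
        rw [hzr, hkr]; nlinarith [hz0]
      exact_mod_cast this
    · -- k ≤ n
      have h1 : k ≤ X.card := by
        have := j.2; omega
      have h2 : X.card ≤ Fintype.card V := by
        calc X.card ≤ (Finset.univ : Finset V).card := Finset.card_image_le
          _ = Fintype.card V := Finset.card_univ
      omega
    · -- p = k / d
      have hzr : ((z.toNat : ℕ) : ℝ) = (z : ℝ) := by
        exact_mod_cast congrArg (Int.cast : ℤ → ℝ) (Int.toNat_of_nonneg hz0.le)
      have hzpos : (0:ℝ) < (z:ℝ) := by exact_mod_cast hz0
      rw [hkr, hzr]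
      field_simp
  · -- Case B : no tight cycle, derive a contradiction with minimality
    exfalso
    push_neg at hA
    have hesc : ∀ v : V, ∃ i : ℕ, rp p (r v + i + 1) ∉ X := by
      intro v
      obtain ⟨i, hi⟩ := hA v
      match i with
      | 0 =>
        exfalso
        have : rp p (r v + 0) = r v := by
          rw [add_zero]
          exact rp_eq_self hp0 (hrIco v)
        rw [Nat.cast_zero] at hi
        exact hi (by rw [this]; exact hrX v)
      | Nat.succ i' =>
        refine ⟨i', ?_⟩
        have : (((i' + 1 : ℕ)) : ℝ) = (i' : ℝ) + 1 := by push_cast; ring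
        rwa [this, ← add_assoc] at hi
    set h : V → ℕ := fun v => Nat.find (hesc v) with hh
    -- the tight relation decreases h by exactly one
    have htight : ∀ v w : V, rp p (r w - r v) = 1 → h v = h w + 1 := by
      intro v w h1
      obtain ⟨m, hm⟩ := rp_sub_int hp0 (r w - r v)
      rw [h1] at hm
      -- hm : 1 - (r w - r v) = m * p
      have hshift : ∀ i : ℕ, rp p (r v + i + 1 + 1) = rp p (r w + i + 1) := by
        intro i
        refine rp_congr hp0 m ?_
        linarith
      have hnot0 : rp p (r v + 0 + 1) ∈ X := by
        have : rp p (r v + 0 + 1) = rp p (r w) := by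
          refine rp_congr hp0 m ?_
          push_cast; linarith
        rw [this, rp_eq_self hp0 (hrIco w)]
        exact hrX w
      have hle : h v ≤ h w + 1 := by
        refine Nat.find_le ?_
        have hw := Nat.find_spec (hesc w)
        have hc1 : ((h w + 1 : ℕ) : ℝ) = ((h w : ℕ) : ℝ) + 1 := by push_cast; ring
        rw [hc1]
        have hc2 : r v + (((h w : ℕ) : ℝ) + 1) + 1 = r v + ((h w : ℕ) : ℝ) + 1 + 1 := by ring
        rw [hc2, hshift (h w)]
        exact hw
      have hge : h w + 1 ≤ h v := by
        have hN0 : h v ≠ 0 := by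
          intro hc
          have hspec0 : rp p (r v + ((h v : ℕ) : ℝ) + 1) ∉ X := Nat.find_spec (hesc v)
          rw [hc] at hspec0
          rw [Nat.cast_zero] at hspec0
          exact hspec0 hnot0
        obtain ⟨N', hN'⟩ := Nat.exists_eq_succ_of_ne_zero hN0
        have hspec := Nat.find_spec (hesc v)
        have : rp p (r w + N' + 1) ∉ X := by
          rw [← hshift N']
          have hcast : ((h v : ℕ) : ℝ) = (N' : ℝ) + 1 := by
            rw [hN']; push_cast; ring
          rw [hcast] at hspec
          have : r v + ((N':ℝ) + 1) + 1 = r v + (N' : ℝ) + 1 + 1 := by ring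
          rwa [this] at hspec
        have : h w ≤ N' := Nat.find_le this
        omega
      omega
    -- bound on h
    set H : ℕ := Finset.univ.sup h with hH
    have hHb : ∀ v, h v ≤ H := fun v => Finset.le_sup (Finset.mem_univ v)
    -- slack constants
    obtain ⟨v₀⟩ := (inferInstance : Nonempty V)
    have hune : (Finset.univ : Finset (V × V)).Nonempty := ⟨(v₀, v₀), Finset.mem_univ _⟩
    set g₁ : V × V → ℝ := fun q =>
      if 1 < rp p (r q.2 - r q.1) then rp p (r q.2 - r q.1) - 1 else 1 with hg₁
    set γ₁ : ℝ := Finset.univ.inf' hune g₁ with hγ₁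
    have hγ₁pos : 0 < γ₁ := by
      rw [hγ₁, Finset.lt_inf'_iff]
      intro q _
      simp only [hg₁]
      by_cases hq : 1 < rp p (r q.2 - r q.1)
      · rw [if_pos hq]; linarith
      · rw [if_neg hq]; norm_num
    have hγ₁le1 : γ₁ ≤ 1 := by
      have hg : g₁ (v₀, v₀) = 1 := by
        simp only [hg₁]
        have hz0 : rp p (0:ℝ) = 0 := rp_eq_self hp0 ⟨le_refl 0, hp0⟩
        simp only [sub_self, hz0]
        norm_num
      rw [hγ₁]
      calc Finset.univ.inf' hune g₁ ≤ g₁ (v₀, v₀) := Finset.inf'_le _ (Finset.mem_univ _)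
        _ = 1 := hg
    have hγ₁le : ∀ v w : V, 1 < rp p (r w - r v) → γ₁ ≤ rp p (r w - r v) - 1 := by
      intro v w hvw
      calc γ₁ ≤ g₁ (v, w) := Finset.inf'_le _ (Finset.mem_univ _)
        _ = rp p (r w - r v) - 1 := by simp only [hg₁]; rw [if_pos hvw]
    set γ₂ : ℝ := Finset.univ.inf' hune (fun q : V × V => p - rp p (r q.2 - r q.1)) with hγ₂
    have hγ₂pos : 0 < γ₂ := by
      rw [hγ₂, Finset.lt_inf'_iff]
      intro q _
      have := (rp_mem hp0 (r q.2 - r q.1)).2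
      linarith
    have hγ₂le : ∀ v w : V, γ₂ ≤ p - rp p (r w - r v) := by
      intro v w
      exact Finset.inf'_le _ (Finset.mem_univ (v, w))
    set δ : ℝ := min γ₁ γ₂ / (2 * (H + 1)) with hδ
    have hδ0 : 0 < δ := by
      rw [hδ]
      have : (0:ℝ) < min γ₁ γ₂ := lt_min hγ₁pos hγ₂pos
      positivity
    have hδH : δ * (H + 1) = min γ₁ γ₂ / 2 := by
      rw [hδ]; field_simp
    set ρ : ℝ := min δ (min (γ₁ / 2) (p - 1)) with hρ
    have hρ0 : 0 < ρ := by
      rw [hρ]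
      refine lt_min hδ0 (lt_min (by linarith) (by linarith))
    have hρδ : ρ ≤ δ := min_le_left _ _
    have hργ : ρ ≤ γ₁ / 2 := le_trans (min_le_right _ _) (min_le_left _ _)
    have hρp : ρ ≤ p - 1 := le_trans (min_le_right _ _) (min_le_right _ _)
    set y : V → ℝ := fun v => r v - δ * h v with hy
    -- key estimate
    have hkey : ∀ v w : V, 1 ≤ rp p (r w - r v) → 1 + ρ ≤ rp p (y w - y v) := by
      intro v w hD1
      set D := rp p (r w - r v) with hD
      set Δ : ℝ := δ * ((h w : ℝ) - (h v : ℝ)) with hΔ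
      have hyd : y w - y v = (r w - r v) - Δ := by
        rw [hy, hΔ]; ring
      have hΔabs : |Δ| ≤ δ * H := by
        rw [hΔ, abs_mul, abs_of_pos hδ0]
        refine mul_le_mul_of_nonneg_left ?_ hδ0.le
        rw [abs_le]
        constructor
        · have := hHb w; have := hHb v
          have h1 : (0:ℝ) ≤ (h w : ℝ) := by positivity
          have h2 : (h v : ℝ) ≤ (H : ℝ) := by exact_mod_cast hHb v
          linarith
        · have h1 : (0:ℝ) ≤ (h v : ℝ) := by positivity
          have h2 : (h w : ℝ) ≤ (H : ℝ) := by exact_mod_cast hHb w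
          linarith
      have hδHH : δ * H ≤ min γ₁ γ₂ / 2 := by
        rw [← hδH]
        have : (H:ℝ) ≤ (H:ℝ) + 1 := by linarith
        nlinarith [hδ0]
      have hmin1 : min γ₁ γ₂ ≤ γ₁ := min_le_left _ _
      have hmin2 : min γ₁ γ₂ ≤ γ₂ := min_le_right _ _
      have hEmem : D - Δ ∈ Set.Ico 0 p := by
        constructor
        · have : Δ ≤ δ * H := (abs_le.mp hΔabs).2
          have : Δ ≤ γ₁ / 2 := by linarith
          linarith
        · have h1 : -Δ ≤ δ * H := by
            have := (abs_le.mp hΔabs).1; linarith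
          have h2 : γ₂ ≤ p - D := hγ₂le v w
          have : D - Δ ≤ D + δ * H := by linarith
          have : D - Δ ≤ D + γ₂ / 2 := by linarith
          linarith
      have hEeq : rp p (y w - y v) = D - Δ := by
        rw [hyd]
        obtain ⟨m, hm⟩ := rp_sub_int hp0 (r w - r v)
        have : rp p ((r w - r v) - Δ) = rp p (D - Δ) := by
          refine (rp_congr hp0 m ?_).symm
          rw [hD]; linarith
        rw [this, rp_eq_self hp0 hEmem]
      rw [hEeq]
      rcases eq_or_lt_of_le hD1 with htig | hslack
      · -- tight case : D = 1
        have h1 : rp p (r w - r v) = 1 := htig.symm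
        have h2 : h v = h w + 1 := htight v w h1
        have hΔval : Δ = -δ := by
          rw [hΔ, h2]; push_cast; ring
        rw [hΔval, ← htig]
        linarith
      · -- slack case : D > 1
        have h1 : γ₁ ≤ D - 1 := hγ₁le v w hslack
        have h2 : Δ ≤ δ * H := (abs_le.mp hΔabs).2
        have h3 : Δ ≤ γ₁ / 2 := by linarith
        linarith
    -- rescale and contradict minimality
    set p' : ℝ := p / (1 + ρ) with hp'
    have h1ρ : (0:ℝ) < 1 + ρ := by linarith
    have hp'1 : 1 ≤ p' := by
      rw [hp', le_div_iff₀ h1ρ]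
      linarith
    have hp'lt : p' < p := by
      rw [hp', div_lt_iff₀ h1ρ]
      nlinarith [hρ0, hp0]
    refine hmin p' hp'1 hp'lt ⟨fun v => y v / (1 + ρ), ?_⟩
    intro v l hvl a ha
    obtain ⟨b, hb, hb1⟩ := hrS v l hvl a ha
    refine ⟨b, hb, ?_⟩
    have : y b / (1 + ρ) - y a / (1 + ρ) = (y b - y a) / (1 + ρ) := by ring
    rw [this, hp', rp_div hp0 h1ρ]
    rw [le_div_iff₀ h1ρ, one_mul]
    exact hkey a b hb1
end Dev3

/-- `χ⃗*(D)` is a rational of the form `k/d`, `1 ≤ d ≤ k ≤ |V(D)|`. -/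
theorem stmt2 {V : Type*} [Fintype V] [Nonempty V] (E : V → V → Prop)
    (hE : ∀ v, ¬ E v v) :
    ∃ k d : ℕ, 1 ≤ d ∧ d ≤ k ∧ k ≤ Fintype.card V ∧
      starDichromatic E = (k : ℝ) / d := by
  classical
  have hstar : starDichromatic E =
      sInf {p : ℝ | 1 ≤ p ∧ ∃ c : V → AddCircle p, IsAcyclicColouring E p c} := rfl
  set S := {p : ℝ | 1 ≤ p ∧ ∃ c : V → AddCircle p, IsAcyclicColouring E p c} with hSdef
  have hnS : ((Fintype.card V : ℕ) : ℝ) ∈ S := card_mem_S E hE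
  have hbdd : BddBelow S := ⟨1, fun p hp => hp.1⟩
  have hSne : S.Nonempty := ⟨_, hnS⟩
  have hp1 : 1 ≤ sInf S := le_csInf hSne fun p hp => hp.1
  rcases eq_or_lt_of_le hp1 with heq | hgt
  · refine ⟨1, 1, le_refl 1, le_refl 1, Fintype.card_pos, ?_⟩
    rw [hstar, ← heq]; norm_num
  · obtain ⟨x, hxC⟩ := exists_valid_at_inf E hE
    have hxS : ValidS E (sInf S) x := (validC_iff_validS hp1 x).mp hxC
    have hmin : ∀ p', 1 ≤ p' → p' < sInf S → ¬ ∃ y : V → ℝ, ValidS E p' y := by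
      rintro p' h1 h2 ⟨y, hy⟩
      have h0' : (0:ℝ) < p' := lt_of_lt_of_le one_pos h1
      have hyC : ValidC E p' (fun v => rp p' (y v)) :=
        (validC_iff_validS h1 _).mpr (validS_rp h0' hy)
      have hp'S : p' ∈ S :=
        ⟨h1, (colouring_iff_validC E h0').mpr ⟨_, fun v => rp_mem h0' _, hyC⟩⟩
      exact absurd (csInf_le hbdd hp'S) (not_le.mpr h2)
    obtain ⟨k, d, h1d, hdk, hkn, hpkd⟩ := rationality E hE hgt hxS hmin
    exact ⟨k, d, h1d, hdk, hkn, by rw [hstar]; exact hpkd⟩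
end

section
/- For every loopless digraph D, ⌈χ⃗*(D)⌉ = χ⃗(D); equivalently, χ⃗(D) − 1 < χ⃗*(D) ≤ χ⃗(D), where χ⃗(D) is the dichromatic number of D. -/
open Finset

variable {V : Type*}

section StarDichromaticAux

open Filter Topology

variable {V : Type*}

private lemma acyclic_of_subsingleton {E : V → V → Prop} (hE : ∀ v, ¬ E v v) {A : Set V}
    (hA : A.Subsingleton) : AcyclicOn E A := by
  rintro v l ⟨hnd, hch⟩ hall
  cases l with
  | nil =>
    simp only [List.nil_append, List.chain_cons, List.Chain.nil, and_true] at hch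
    cases hch with
    | cons_cons h _ => exact hE v h
  | cons b l' =>
    have hv : v ∈ A := hall v (by simp)
    have hb : b ∈ A := hall b (by simp)
    have hvb : v = b := hA hv hb
    rw [List.nodup_cons] at hnd
    exact hnd.1 (hvb ▸ (List.mem_cons_self : b ∈ b :: l'))

private lemma dichromatic_set_nonempty [Fintype V] (E : V → V → Prop) (hE : ∀ v, ¬ E v v) :
    {k : ℕ | ∃ c : V → Fin k, ∀ i : Fin k, AcyclicOn E (c ⁻¹' {i})}.Nonempty := by
  classical
  refine ⟨Fintype.card V, Fintype.equivFin V, fun i => acyclic_of_subsingleton hE ?_⟩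
  intro x hx y hy
  have hx' : Fintype.equivFin V x = i := hx
  have hy' : Fintype.equivFin V y = i := hy
  exact (Fintype.equivFin V).injective (hx'.trans hy'.symm)

private lemma dichromatic_le_ceil [Fintype V] (E : V → V → Prop) {p : ℝ} (hp : 1 ≤ p)
    {c : V → AddCircle p} (hc : IsAcyclicColouring E p c) :
    dichromatic E ≤ ⌈p⌉₊ := by
  classical
  have hp0 : (0:ℝ) < p := lt_of_lt_of_le one_pos hp
  haveI : Fact ((0:ℝ) < p) := ⟨hp0⟩
  choose ρ hρ hρc using fun v => AddCircle.eq_coe_Ico (c v)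
  have hcol : ∀ v, ⌊ρ v⌋₊ < ⌈p⌉₊ := by
    intro v
    have h1 : (⌊ρ v⌋₊ : ℝ) < (⌈p⌉₊ : ℝ) :=
      lt_of_le_of_lt (Nat.floor_le (hρ v).1) (lt_of_lt_of_le (hρ v).2 (Nat.le_ceil p))
    exact_mod_cast h1
  apply Nat.sInf_le
  refine ⟨fun v => ⟨⌊ρ v⌋₊, hcol v⟩, ?_⟩
  rintro i v l hcyc hall
  have hmem : ∀ x ∈ v :: l, ((i : ℕ) : ℝ) ≤ ρ x ∧ ρ x < ((i : ℕ) : ℝ) + 1 := by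
    intro x hx
    have h1 : (⟨⌊ρ x⌋₊, hcol x⟩ : Fin ⌈p⌉₊) = i := hall x hx
    have h2 : ⌊ρ x⌋₊ = (i : ℕ) := by
      simpa [Fin.ext_iff] using h1
    exact (Nat.floor_eq_iff (hρ x).1).mp h2
  -- take the maximum representative on the cycle
  obtain ⟨x₀, hx₀mem, hx₀max⟩ :=
    Finset.exists_max_image (v :: l).toFinset ρ ⟨v, by simp⟩
  have hx₀ : x₀ ∈ v :: l := List.mem_toFinset.mp hx₀mem
  set M := ρ x₀ with hM
  have hMlt : M < ((i : ℕ) : ℝ) + 1 := (hmem x₀ hx₀).2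
  set δ : ℝ := (((i : ℕ) : ℝ) + 1 - M) / 2 with hδ
  have hδ0 : 0 < δ := by simp only [hδ]; linarith
  refine hc (M - 1 + δ) v l hcyc ?_
  intro x hx
  have h1 := (hmem x hx).1
  have h2 : ρ x ≤ M := hx₀max x (List.mem_toFinset.mpr hx)
  refine ⟨ρ x, ⟨?_, ?_⟩, hρc x⟩
  · simp only [hδ]; linarith
  · simp only [hδ]; linarith

private lemma int_eq_zero_of_cast_lt {d : ℤ} (h1 : (-1:ℝ) < (d:ℝ)) (h2 : (d:ℝ) < 1) :
    d = 0 := by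
  have : (-1:ℤ) < d ∧ d < 1 := by exact_mod_cast And.intro h1 h2
  omega

private lemma natCast_mem_starSet [Fintype V] (E : V → V → Prop) {k : ℕ} (hk : 1 ≤ k)
    {c : V → Fin k} (hc : ∀ i : Fin k, AcyclicOn E (c ⁻¹' {i})) :
    ((k : ℝ)) ∈ {p : ℝ | 1 ≤ p ∧ ∃ c : V → AddCircle p, IsAcyclicColouring E p c} := by
  refine ⟨by exact_mod_cast hk, fun v => ((((c v : ℕ) : ℝ)) : AddCircle (k:ℝ)), ?_⟩
  intro a v l hcyc hall
  have key : ∀ x ∈ v :: l, c x = c v := by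
    intro x hx
    obtain ⟨tx, htx, hex⟩ := hall x hx
    obtain ⟨tv, htv, hev⟩ := hall v (List.mem_cons_self : v ∈ v :: l)
    have hex' : ((tx:ℝ) : AddCircle (k:ℝ)) = ((((c x : ℕ) : ℝ)) : AddCircle (k:ℝ)) := hex
    have hev' : ((tv:ℝ) : AddCircle (k:ℝ)) = ((((c v : ℕ) : ℝ)) : AddCircle (k:ℝ)) := hev
    have hx0 : (((((c x : ℕ) : ℝ)) - tx : ℝ) : AddCircle (k:ℝ)) = 0 := by
      rw [AddCircle.coe_sub, hex', sub_self]
    have hv0 : (((((c v : ℕ) : ℝ)) - tv : ℝ) : AddCircle (k:ℝ)) = 0 := by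
      rw [AddCircle.coe_sub, hev', sub_self]
    obtain ⟨mx, hmx⟩ := (AddCircle.coe_eq_zero_iff (k:ℝ)).mp hx0
    obtain ⟨mv, hmv⟩ := (AddCircle.coe_eq_zero_iff (k:ℝ)).mp hv0
    rw [zsmul_eq_mul] at hmx hmv
    -- tx - tv = (cx - cv) - (mx - mv) k
    set d : ℤ := ((c x : ℕ) : ℤ) - ((c v : ℕ) : ℤ) with hd
    set m : ℤ := mx - mv with hm
    have hcast : ((d - m * (k:ℤ) : ℤ) : ℝ) = tx - tv := by
      push_cast
      simp only [hd, hm]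
      push_cast
      linarith
    have hsub1 : (-1:ℝ) < tx - tv := by
      have := htx.1; have := htv.2; linarith
    have hsub2 : tx - tv < 1 := by
      have := htx.2; have := htv.1; linarith
    have hz : d - m * (k:ℤ) = 0 :=
      int_eq_zero_of_cast_lt (by rw [hcast] at *; exact hcast ▸ hsub1) (hcast ▸ hsub2)
    have hdm : d = m * (k:ℤ) := by omega
    have hdb1 : d < (k:ℤ) := by
      have := (c x).isLt; have := (c v).isLt
      simp only [hd]; omega
    have hdb2 : -(k:ℤ) < d := by
      have := (c x).isLt; have := (c v).isLt
      simp only [hd]; omega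
    have hm0 : m = 0 := by
      by_contra hm0
      have hk' : (1:ℤ) ≤ (k:ℤ) := by exact_mod_cast hk
      rcases lt_or_gt_of_ne hm0 with hlt | hgt
      · have : m * (k:ℤ) ≤ -(k:ℤ) := by nlinarith
        omega
      · have : (k:ℤ) ≤ m * (k:ℤ) := by nlinarith
        omega
    have : d = 0 := by rw [hdm, hm0, zero_mul]
    have hval : ((c x : ℕ) : ℤ) = ((c v : ℕ) : ℤ) := by omega
    exact Fin.ext (by exact_mod_cast hval)
  exact hc (c v) v l hcyc (fun x hx => key x hx)

private lemma sInf_mem_starSet [Fintype V] (E : V → V → Prop)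
    (hne : {p : ℝ | 1 ≤ p ∧ ∃ c : V → AddCircle p, IsAcyclicColouring E p c}.Nonempty) :
    sInf {p : ℝ | 1 ≤ p ∧ ∃ c : V → AddCircle p, IsAcyclicColouring E p c} ∈
      {p : ℝ | 1 ≤ p ∧ ∃ c : V → AddCircle p, IsAcyclicColouring E p c} := by
  classical
  set S := {p : ℝ | 1 ≤ p ∧ ∃ c : V → AddCircle p, IsAcyclicColouring E p c} with hSdef
  set s := sInf S with hs
  have hbdd : BddBelow S := ⟨1, fun p hp => hp.1⟩
  have hs1 : 1 ≤ s := le_csInf hne (fun p hp => hp.1)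
  have hseq : ∀ n : ℕ, ∃ p, p ∈ S ∧ p < s + 1/(n+1) := by
    intro n
    obtain ⟨a, ha, hlt⟩ := Real.lt_sInf_add_pos hne (by positivity : (0:ℝ) < 1/(n+1))
    exact ⟨a, ha, hlt⟩
  choose P hPS hPlt using hseq
  have hPge : ∀ n, s ≤ P n := fun n => csInf_le hbdd (hPS n)
  have hPtend : Tendsto P atTop (𝓝 s) := by
    have h1 : Tendsto (fun n : ℕ => s + 1/((n:ℝ)+1)) atTop (𝓝 (s + 0)) :=
      tendsto_const_nhds.add tendsto_one_div_add_atTop_nhds_zero_nat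
    rw [add_zero] at h1
    exact tendsto_of_tendsto_of_tendsto_of_le_of_le tendsto_const_nhds h1 hPge
      (fun n => le_of_lt (hPlt n))
  have hP0 : ∀ n, (0:ℝ) < P n := fun n => lt_of_lt_of_le one_pos (hPS n).1
  choose C hC using fun n => (hPS n).2
  have hrep : ∀ n (v : V), ∃ b, b ∈ Set.Ico (0:ℝ) (P n) ∧ (b : AddCircle (P n)) = C n v := by
    intro n v
    haveI : Fact ((0:ℝ) < P n) := ⟨hP0 n⟩
    exact AddCircle.eq_coe_Ico (C n v)
  choose ρ hρmem hρeq using hrep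
  have hPle : ∀ n, P n ≤ s + 1 := by
    intro n
    have h1 : (1:ℝ)/((n:ℝ)+1) ≤ 1 := by
      rw [div_le_one (by positivity)]
      linarith [Nat.cast_nonneg (α := ℝ) n]
    linarith [hPlt n]
  have hbox : ∀ n, (fun v => ρ n v) ∈ Set.pi Set.univ (fun _ : V => Set.Icc (0:ℝ) (s+1)) := by
    intro n v _
    exact ⟨(hρmem n v).1, le_of_lt (lt_of_lt_of_le (hρmem n v).2 (hPle n))⟩
  have hcomp : IsCompact (Set.pi Set.univ fun _ : V => Set.Icc (0:ℝ) (s+1)) :=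
    isCompact_univ_pi (fun _ => isCompact_Icc)
  obtain ⟨r, _, φ, hφ, hconv⟩ := hcomp.tendsto_subseq hbox
  have hcv : ∀ v, Tendsto (fun n => ρ (φ n) v) atTop (𝓝 (r v)) :=
    fun v => tendsto_pi_nhds.mp hconv v
  have hPφ : Tendsto (fun n => P (φ n)) atTop (𝓝 s) := hPtend.comp hφ.tendsto_atTop
  refine ⟨hs1, fun v => ((r v : ℝ) : AddCircle s), ?_⟩
  intro a v l hcyc hall
  have hsh : ∀ x ∈ v :: l, ∃ mm : ℤ, r x + (mm:ℝ) * s ∈ Set.Ioo a (a+1) := by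
    intro x hx
    obtain ⟨t, ht, hte⟩ := hall x hx
    have hte' : ((t:ℝ) : AddCircle s) = ((r x : ℝ) : AddCircle s) := hte
    have h0 : ((t - r x : ℝ) : AddCircle s) = 0 := by
      rw [AddCircle.coe_sub, hte', sub_self]
    obtain ⟨mm, hmm⟩ := (AddCircle.coe_eq_zero_iff s).mp h0
    rw [zsmul_eq_mul] at hmm
    refine ⟨mm, ?_⟩
    have : r x + (mm:ℝ) * s = t := by linarith
    rw [this]; exact ht
  choose! m hm using hsh
  have hev : ∀ᶠ n in atTop, ∀ x, x ∈ v :: l → ρ (φ n) x + (m x : ℝ) * P (φ n) ∈ Set.Ioo a (a+1) := by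
    rw [Filter.eventually_all]
    intro x
    by_cases hx : x ∈ v :: l
    · have htd : Tendsto (fun n => ρ (φ n) x + (m x : ℝ) * P (φ n)) atTop
          (𝓝 (r x + (m x : ℝ) * s)) := (hcv x).add (hPφ.const_mul _)
      exact (htd.eventually (isOpen_Ioo.eventually_mem (hm x hx))).mono
        (fun n h _ => h)
    · exact Filter.Eventually.of_forall (fun n h => absurd h hx)
  obtain ⟨n, hn⟩ := hev.exists
  refine hC (φ n) a v l hcyc ?_
  intro x hx
  refine ⟨ρ (φ n) x + (m x : ℝ) * P (φ n), hn x hx, ?_⟩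
  have hz : (((m x : ℝ) * P (φ n) : ℝ) : AddCircle (P (φ n))) = 0 :=
    (AddCircle.coe_eq_zero_iff (P (φ n))).mpr ⟨m x, by rw [zsmul_eq_mul]⟩
  show ((ρ (φ n) x + (m x : ℝ) * P (φ n) : ℝ) : AddCircle (P (φ n))) = C (φ n) x
  rw [AddCircle.coe_add, hz, add_zero, hρeq]

end StarDichromaticAux

/-- `⌈χ⃗*(D)⌉ = χ⃗(D)`; equivalently `χ⃗(D) - 1 < χ⃗*(D) ≤ χ⃗(D)`. -/
theorem stmt4 {V : Type*} [Fintype V] [Nonempty V] (E : V → V → Prop)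
    (hE : ∀ v, ¬ E v v) :
    ⌈starDichromatic E⌉₊ = dichromatic E ∧
    (dichromatic E : ℝ) - 1 < starDichromatic E ∧
    starDichromatic E ≤ (dichromatic E : ℝ) := by
  classical
  have hDne := dichromatic_set_nonempty E hE
  have hkmem := Nat.sInf_mem hDne
  have hkdef : dichromatic E = sInf {k : ℕ | ∃ c : V → Fin k, ∀ i : Fin k,
      AcyclicOn E (c ⁻¹' {i})} := rfl
  rw [← hkdef] at hkmem
  obtain ⟨c, hc⟩ := hkmem
  set k := dichromatic E with hk
  have hk1 : 1 ≤ k := (c (Classical.arbitrary V)).pos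
  have hkS : ((k:ℝ)) ∈ {p : ℝ | 1 ≤ p ∧ ∃ c : V → AddCircle p, IsAcyclicColouring E p c} :=
    natCast_mem_starSet E hk1 hc
  have hbdd : BddBelow {p : ℝ | 1 ≤ p ∧ ∃ c : V → AddCircle p, IsAcyclicColouring E p c} :=
    ⟨1, fun p hp => hp.1⟩
  have hsd : starDichromatic E =
      sInf {p : ℝ | 1 ≤ p ∧ ∃ c : V → AddCircle p, IsAcyclicColouring E p c} := rfl
  have hle : starDichromatic E ≤ (k:ℝ) := by rw [hsd]; exact csInf_le hbdd hkS
  have hmem := sInf_mem_starSet E ⟨_, hkS⟩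
  rw [← hsd] at hmem
  obtain ⟨hs1, c₀, hc₀⟩ := hmem
  have hceil1 : k ≤ ⌈starDichromatic E⌉₊ := dichromatic_le_ceil E hs1 hc₀
  have hceil2 : ⌈starDichromatic E⌉₊ ≤ k := by
    calc ⌈starDichromatic E⌉₊ ≤ ⌈((k:ℝ))⌉₊ := Nat.ceil_mono hle
    _ = k := by simp
  have hceq : ⌈starDichromatic E⌉₊ = k := le_antisymm hceil2 hceil1
  refine ⟨hceq, ?_, hle⟩
  have h0 : 0 ≤ starDichromatic E := le_trans zero_le_one hs1
  have hlt := Nat.ceil_lt_add_one h0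
  rw [hceq] at hlt
  linarith
end
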